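/- Let D be a fixed deduction system and S a constraint system. For every ground substitution σ with dom(σ) = vars(S) there exists a derivation that is (S,σ)-compliant and (Sub(S),σ)-maximal and in which no term is deduced twice by a standard rule. -/

import Mathlib

/-! ### Terms -/

/-- First-order terms: variables, ordinary constants, nonces (an infinite
subset of the constants), and function applications. -/
inductive Term : Type
  | var : ℕ → Term
  | cst : ℕ → Term
  | nonce : ℕ → Term
  | func : ℕ → List Term → Term

namespace Term

/-- The subterm relation. -/
inductive IsSubterm : Term → Term → Prop
  | refl (t : Term) : IsSubterm t t
  | func {s t : Term} {f : ℕ} {args : List Term} :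
      t ∈ args → IsSubterm s t → IsSubterm s (func f args)

/-- The set of subterms of a term. -/
def sub (t : Term) : Set Term := {s | IsSubterm s t}

/-- The set of (indices of) variables of a term. -/
def varsSet (t : Term) : Set ℕ := {x | IsSubterm (var x) t}

/-- A term is ground if it has no variables. -/
def Ground (t : Term) : Prop := varsSet t = ∅

/-- The term is a variable. -/
def IsVar : Term → Prop
  | var _ => True
  | _ => False

/-- Application of a substitution to a term. -/
noncomputable def subst (σ : ℕ → Term) : Term → Term
  | var x => σ x
  | cst c => cst c
  | nonce n => nonce n
  | func f args => func f (args.attach.map (fun a => Term.subst σ a.1))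
decreasing_by
  have := List.sizeOf_lt_of_mem a.2
  simp only [Term.func.sizeOf_spec]
  omega

/-- The function symbol `f` occurs in the term `t`. -/
def OccursFun (f : ℕ) (t : Term) : Prop := ∃ args, IsSubterm (func f args) t

end Term

/-! ### Substitutions -/

/-- Substitutions (maps from variables to terms). -/
abbrev Subst := ℕ → Term

namespace Subst

/-- The domain of a substitution. -/
def dom (σ : Subst) : Set ℕ := {x | σ x ≠ .var x}

/-- The image of a substitution. -/
def img (σ : Subst) : Set Term := {t | ∃ x ∈ dom σ, σ x = t}

/-- Idempotency of a substitution. -/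
def Idem (σ : Subst) : Prop := ∀ x, (σ x).subst σ = σ x

/-- A substitution is ground if its image consists of ground terms. -/
def IsGround (σ : Subst) : Prop := ∀ x ∈ dom σ, (σ x).Ground

open Classical in
/-- Union of two substitutions (intended for disjoint domains). -/
noncomputable def union (σ τ : Subst) : Subst := fun x =>
  if σ x = Term.var x then τ x else σ x

end Subst

/-- Subterms of a set of terms. -/
def subT (T : Set Term) : Set Term := {s | ∃ t ∈ T, Term.IsSubterm s t}

/-- Variables of a set of terms. -/
def varsT (T : Set Term) : Set ℕ := {x | ∃ t ∈ T, Term.IsSubterm (.var x) t}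

/-- DAG size of a set of terms: number of its subterms. -/
noncomputable def sizeT (T : Set Term) : ℕ := (subT T).ncard

/-- Size of a substitution: DAG size of its image. -/
noncomputable def sizeSubst (σ : Subst) : ℕ := sizeT σ.img

/-! ### Deduction systems, steps and derivations -/

/-- A deduction system: a finite set of (standard) deduction rules, each rule
being a pair (left-hand sides, right-hand side) whose right-hand-side variables
occur in the left-hand sides.  Nonce-creation rules and reception rules are
built into the notions of steps/derivations below. -/
structure DeductionSystem where
  rules : Set (List Term × Term)
  finite : rules.Finite
  wf : ∀ p ∈ rules, p.2.varsSet ⊆ varsT {u | u ∈ p.1}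

/-- A step of a derivation: a reception `? → t` or a standard deduction `l → r`
(nonce creations are standard deductions with empty left-hand side). -/
inductive Step
  | recv : Term → Step
  | std : List Term → Term → Step

namespace Step

/-- Right-hand side of a step. -/
def rhs : Step → Term
  | recv t => t
  | std _ r => r

/-- All terms occurring in the step. -/
def terms : Step → Set Term
  | recv t => {t}
  | std l r => {r} ∪ {u | u ∈ l}

end Step

/-- The set of right-hand sides of the first `k` steps of `D`. -/
def RHSset (D : List Step) (k : ℕ) : Set Term :=
  {r | ∃ j < k, ∃ s, D[j]? = some s ∧ s.rhs = r}

/-- A step is a deduction of the system `DS`: a reception of a ground term, a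
nonce creation, or a ground instance of a (standard) rule of `DS`. -/
def IsDeduction (DS : DeductionSystem) (s : Step) : Prop :=
  match s with
  | .recv t => t.Ground
  | .std l r =>
      (∀ u ∈ l, u.Ground) ∧ r.Ground ∧
        ((l = [] ∧ ∃ n, r = Term.nonce n) ∨
          ∃ p ∈ DS.rules, ∃ σ : Subst,
            l = p.1.map (Term.subst σ) ∧ r = p.2.subst σ)

/-- A derivation: a sequence of deductions in which the left-hand side of every
standard step has already been deduced. -/
def IsDerivation (DS : DeductionSystem) (D : List Step) : Prop :=
  (∀ s ∈ D, IsDeduction DS s) ∧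
  ∀ (i : ℕ) (l : List Term) (r : Term), D[i]? = some (Step.std l r) → ∀ u ∈ l, u ∈ RHSset D i

/-- The position of the first reception of `D` at index `≥ k` (or `|D|` if
there is none): (0-indexed version of) `Next(D, ·)`. -/
noncomputable def nextRecv (D : List Step) (k : ℕ) : ℕ :=
  sInf ({D.length} ∪ {j | k ≤ j ∧ ∃ t, D[j]? = some (Step.recv t)})

/-- `Der DS K`: the set of ground terms derivable from the knowledge `K`. -/
def Der (DS : DeductionSystem) (K : Set Term) : Set Term :=
  {t | ∃ D : List Step, IsDerivation DS D ∧
        (∀ (j : ℕ) (u : Term), D[j]? = some (Step.recv u) → u ∈ K) ∧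
        ∃ l, D.getLast? = some (Step.std l t)}

/-- No term is deduced twice in `D` by a standard rule. -/
def NoDuplicateStd (D : List Step) : Prop :=
  ∀ (i j : ℕ) (li lj : List Term) (r : Term), D[i]? = some (Step.std li r) → D[j]? = some (Step.std lj r) → i = j

/-- `(T,σ)`-maximality of a derivation. -/
def MaximalDeriv (DS : DeductionSystem) (T : Set Term) (σ : Subst) (D : List Step) : Prop :=
  ∀ t ∈ subT T, ∀ k ≤ D.length,
    t.subst σ ∈ Der DS (RHSset D k) → t.subst σ ∈ RHSset D (nextRecv D k)

/-! ### Constraint systems -/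

/-- A constraint: a reception `?t`, an emission `!t` or a negative
constraint `♮t`. -/
inductive Constraint
  | recv : Term → Constraint
  | send : Term → Constraint
  | neg : Term → Constraint

namespace Constraint

/-- The term of a constraint. -/
def term : Constraint → Term
  | recv t => t
  | send t => t
  | neg t => t

/-- The constraint is a send constraint. -/
def isSend : Constraint → Bool
  | send _ => true
  | _ => false

/-- Apply a substitution to a constraint. -/
noncomputable def map (θ : Subst) : Constraint → Constraint
  | recv t => recv (t.subst θ)
  | send t => send (t.subst θ)
  | neg t => neg (t.subst θ)

end Constraint

/-- A (pre-)constraint system is a finite sequence of constraints. -/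
abbrev CSystem := List Constraint

/-- The terms of a constraint system. -/
def csTerms (S : CSystem) : Set Term := {t | ∃ c ∈ S, c.term = t}

/-- `Sub(S)`. -/
def csSub (S : CSystem) : Set Term := subT (csTerms S)

/-- `vars(S)`. -/
def csVars (S : CSystem) : Set ℕ := varsT (csTerms S)

/-- `|Sub(S)|`. -/
noncomputable def csSize (S : CSystem) : ℕ := sizeT (csTerms S)

/-- Apply a substitution to all constraints of a system. -/
noncomputable def csSubst (S : CSystem) (θ : Subst) : CSystem := S.map (Constraint.map θ)

/-- Origination and determination: `S` is a genuine constraint system. -/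
def IsCS (S : CSystem) : Prop :=
  (∀ (i : ℕ) (t : Term), S[i]? = some (Constraint.send t) →
      t.varsSet ⊆ {x | ∃ j < i, ∃ u : Term, S[j]? = some (Constraint.recv u) ∧ x ∈ u.varsSet}) ∧
  (∀ (i : ℕ) (t : Term), S[i]? = some (Constraint.neg t) →
      t.varsSet ⊆ {x | ∃ (j : ℕ) (u : Term), S[j]? = some (Constraint.recv u) ∧ x ∈ u.varsSet})

/-- The knowledge produced by the send constraints up to (and including) index
`i`, instantiated by `σ` (this is `{tⱼσ : j ≤ prev(i), S[j] = !tⱼ}`). -/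
def knowledge (S : CSystem) (σ : Subst) (i : ℕ) : Set Term :=
  {u | ∃ j ≤ i, ∃ t, S[j]? = some (Constraint.send t) ∧ u = t.subst σ}

/-- A solution of a constraint system. -/
structure IsSolution (DS : DeductionSystem) (S : CSystem) (σ : Subst) : Prop where
  ground : σ.IsGround
  idem : σ.Idem
  dom_eq : σ.dom = csVars S
  recv_mem : ∀ (i : ℕ) (t : Term), S[i]? = some (Constraint.recv t) → t.subst σ ∈ Der DS (knowledge S σ i)
  neg_not_mem : ∀ (i : ℕ) (t : Term), S[i]? = some (Constraint.neg t) → t.subst σ ∉ Der DS (knowledge S σ i)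

/-- `prev(i)`: the last send index `≤ i` of `S`, if any. -/
def prevSend (S : CSystem) (i : ℕ) : Option ℕ :=
  ((List.range (i + 1)).filter (fun j => ((S[j]?).map Constraint.isSend).getD false)).max?

/-- `(S,σ)`-compliance of a derivation `D` with the mapping `α`: `α` is a
strictly increasing bijection from the send indices of `S` onto the reception
positions of `D`, sending `!t` to the reception `? → tσ`. -/
structure Compliant (S : CSystem) (σ : Subst) (D : List Step) (α : ℕ → ℕ) : Prop where
  mono : ∀ (i j : ℕ) (ti tj : Term), S[i]? = some (Constraint.send ti) →
    S[j]? = some (Constraint.send tj) → i < j → α i < α j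
  maps : ∀ (i : ℕ) (t : Term), S[i]? = some (Constraint.send t) →
    D[α i]? = some (Step.recv (t.subst σ))
  surj : ∀ (j : ℕ) (u : Term), D[j]? = some (Step.recv u) →
    ∃ i t, S[i]? = some (Constraint.send t) ∧ α i = j

/-- Position in `D` of the first reception strictly after the reception
corresponding (via `α`) to the last send constraint `≤ i` of `S` (or the first
reception of `D` if there is no such send): this is `Next(D, α(prev(i)))`. -/
noncomputable def cutoff (S : CSystem) (D : List Step) (α : ℕ → ℕ) (i : ℕ) : ℕ :=
  match prevSend S i with
  | none => nextRecv D 0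
  | some p => nextRecv D (α p + 1)

/-- `D, σ, α ⊢ S`: the derivation `D` is a proof of `σ ⊨ S`. -/
structure IsProof (DS : DeductionSystem) (S : CSystem) (σ : Subst)
    (D : List Step) (α : ℕ → ℕ) : Prop where
  deriv : IsDerivation DS D
  compliant : Compliant S σ D α
  recv_proved : ∀ (i : ℕ) (t : Term), S[i]? = some (Constraint.recv t) →
    ∃ j < cutoff S D α i, ∃ s, D[j]? = some s ∧ s.rhs = t.subst σ
  neg_not_mem : ∀ (i : ℕ) (t : Term), S[i]? = some (Constraint.neg t) →
    t.subst σ ∉ Der DS (knowledge S σ i)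

/-! ### Subterm deduction systems -/

/-- A composition rule: `x₁,…,xₙ → f(x₁,…,xₙ)` with pairwise distinct
variables `xᵢ`. -/
def IsCompRule (p : List Term × Term) : Prop :=
  ∃ (f : ℕ) (xs : List ℕ), xs.Nodup ∧ p.1 = xs.map Term.var ∧
    p.2 = Term.func f (xs.map Term.var)

/-- A decomposition rule: the right-hand side is a subterm of a left-hand
side. -/
def IsDecompRule (p : List Term × Term) : Prop :=
  ∃ l ∈ p.1, p.2 ∈ l.sub

/-- A subterm deduction system: every standard rule is a composition or a
decomposition rule. -/
def SubtermSystem (DS : DeductionSystem) : Prop :=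
  ∀ p ∈ DS.rules, IsCompRule p ∨ IsDecompRule p

/-- A step is a composition: a reception, a nonce creation, or an instance of
a composition rule of `DS`. -/
def IsCompositionStep (DS : DeductionSystem) (s : Step) : Prop :=
  match s with
  | .recv _ => True
  | .std l r =>
      (l = [] ∧ ∃ n, r = Term.nonce n) ∨
        ∃ p ∈ DS.rules, IsCompRule p ∧
          ∃ σ : Subst, l = p.1.map (Term.subst σ) ∧ r = p.2.subst σ

/-- `l → r` is an instance (not necessarily ground) of a standard deduction
rule of the system. -/
def StdRuleInstance (DS : DeductionSystem) (l : List Term) (r : Term) : Prop :=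
  (l = [] ∧ ∃ n, r = Term.nonce n) ∨
    ∃ p ∈ DS.rules, ∃ σ : Subst, l = p.1.map (Term.subst σ) ∧ r = p.2.subst σ

/-- DAG size of a rule. -/
noncomputable def ruleSize (p : List Term × Term) : ℕ :=
  sizeT ({p.2} ∪ {u | u ∈ p.1})

/-- Maximal size of a decomposition rule of the system. -/
noncomputable def maxDecompSize (DS : DeductionSystem) : ℕ :=
  sSup {n | ∃ p ∈ DS.rules, IsDecompRule p ∧ ruleSize p = n}

/-! ### Localization -/

/-- `T` localizes the derivation `D` for `σ`. -/
def Localizes (DS : DeductionSystem) (T : Set Term) (σ : Subst) (D : List Step) : Prop :=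
  ∀ (i : ℕ) (l : List Term) (r : Term), D[i]? = some (Step.std l r) →
    ∀ t ∈ subT T, ¬ t.IsVar → t.subst σ = r →
      ∃ ts : List Term, (∀ u ∈ ts, u ∈ subT T) ∧
        (∀ u ∈ ts, u.subst σ ∈ RHSset D i) ∧ StdRuleInstance DS ts t

/-- `T` one-to-one localizes `D` for `σ`. -/
def OneToOneLocalizes (DS : DeductionSystem) (T : Set Term) (σ : Subst)
    (D : List Step) : Prop :=
  Localizes DS T σ D ∧ Set.InjOn (Term.subst σ) (subT T)

/-! ### Terms of a derivation, `Out(S)` -/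

/-- The terms occurring in a derivation. -/
def derTerms (D : List Step) : Set Term := {t | ∃ s ∈ D, t ∈ s.terms}

/-- `Sub(D)`. -/
def subD (D : List Step) : Set Term := subT (derTerms D)

/-- The terms of the send constraints of `S`. -/
def outTerms (S : CSystem) : Set Term := {t | Constraint.send t ∈ S}

/-! ### Milestone sequences -/

/-- An element of a milestone sequence: `→ t` or `? → t`. -/
inductive MStep
  | ded : Term → MStep
  | recvm : Term → MStep

/-- The term of a milestone element. -/
def MStep.term : MStep → Term
  | ded t => t
  | recvm t => t

/-- `M` is a milestone candidate sequence of `D` for `(T,σ)`. -/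
def IsMilestoneOf (T : Set Term) (σ : Subst) (D : List Step) (M : List MStep) : Prop :=
  (∀ m ∈ M, m.term ∈ subT T) ∧
  ∃ α : ℕ → ℕ, (∀ i j, i < j → j < M.length → α i < α j) ∧
    ∀ (i : ℕ) (m : MStep), M[i]? = some m →
      match m with
      | MStep.recvm t => D[α i]? = some (Step.recv (t.subst σ))
      | MStep.ded t => ∃ l, D[α i]? = some (Step.std l (t.subst σ))

/-- `M` is the `(T,σ)`-milestone sequence of `D`: a candidate of maximal
length. -/
def IsMilestoneSeq (T : Set Term) (σ : Subst) (D : List Step) (M : List MStep) : Prop :=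
  IsMilestoneOf T σ D M ∧ ∀ M', IsMilestoneOf T σ D M' → M'.length ≤ M.length

/-! ### Free pairing symbol -/

/-- `f` occurs in the rule `p`. -/
def OccursInRule (f : ℕ) (p : List Term × Term) : Prop :=
  (∃ t ∈ p.1, t.OccursFun f) ∨ p.2.OccursFun f

/-- The system contains a composition rule `x₁, x₂ → f(x₁,x₂)` where the
binary symbol `f` occurs in no other rule. -/
def FreePairing (DS : DeductionSystem) : Prop :=
  ∃ (f x₁ x₂ : ℕ), x₁ ≠ x₂ ∧
    ([Term.var x₁, Term.var x₂], Term.func f [Term.var x₁, Term.var x₂]) ∈ DS.rules ∧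
    ∀ p ∈ DS.rules, OccursInRule f p →
      p = ([Term.var x₁, Term.var x₂], Term.func f [Term.var x₁, Term.var x₂])

/-! ### Unification -/

/-- `σ` is a unifier of the unification system `U`. -/
def IsUnifier (U : Set (Term × Term)) (σ : Subst) : Prop :=
  ∀ pq ∈ U, Term.subst σ pq.1 = Term.subst σ pq.2

/-- `θ` is a most general unifier of `U`. -/
def IsMGU (U : Set (Term × Term)) (θ : Subst) : Prop :=
  IsUnifier U θ ∧ ∀ σ, IsUnifier U σ → ∃ τ : Subst, ∀ x, σ x = (θ x).subst τ

/-- The terms of a unification system. -/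
def unifTerms (U : Set (Term × Term)) : Set Term :=
  {t | ∃ pq ∈ U, t = pq.1 ∨ t = pq.2}

/-- The variables of a unification system. -/
def unifVars (U : Set (Term × Term)) : Set ℕ := varsT (unifTerms U)

/-! ### Auxiliary lemmas -/

namespace AuxCM

/-- The set of right-hand sides of a list of steps. -/
def rset (L : List Step) : Set Term := {r | ∃ s ∈ L, s.rhs = r}

lemma RHSset_eq (D : List Step) (k : ℕ) : RHSset D k = rset (D.take k) := by
  ext r
  simp only [RHSset, rset, Set.mem_setOf_eq, List.mem_iff_getElem?]
  constructor
  · rintro ⟨j, hj, s, hs, hr⟩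
    refine ⟨s, ⟨j, ?_⟩, hr⟩
    rw [List.getElem?_take]
    simp [hj, hs]
  · rintro ⟨s, ⟨j, hs⟩, hr⟩
    rw [List.getElem?_take] at hs
    by_cases hj : j < k
    · exact ⟨j, hj, s, by simpa [hj] using hs, hr⟩
    · simp [hj] at hs

lemma rset_append (A B : List Step) : rset (A ++ B) = rset A ∪ rset B := by
  ext r; simp [rset, List.mem_append, or_and_right, exists_or]

lemma RHSset_mono (D : List Step) {k k' : ℕ} (h : k ≤ k') : RHSset D k ⊆ RHSset D k' := by
  rintro r ⟨j, hj, s, hs, hr⟩; exact ⟨j, lt_of_lt_of_le hj h, s, hs, hr⟩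

lemma RHSset_prefix (D E : List Step) {k : ℕ} (h : k ≤ D.length) :
    RHSset (D ++ E) k = RHSset D k := by
  rw [RHSset_eq, RHSset_eq, List.take_append_of_le_length h]

lemma RHSset_full (D : List Step) : RHSset D D.length = rset D := by
  rw [RHSset_eq, List.take_length]

lemma RHSset_append_offset (A B : List Step) (i : ℕ) :
    RHSset (A ++ B) (A.length + i) = rset A ∪ RHSset B i := by
  rw [RHSset_eq, RHSset_eq, List.take_length_add_append, rset_append]

lemma Der_mono (DS : DeductionSystem) {K K' : Set Term} (h : K ⊆ K') :
    Der DS K ⊆ Der DS K' := by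
  rintro t ⟨D, h1, h2, h3⟩
  exact ⟨D, h1, fun j u hj => h (h2 j u hj), h3⟩

end AuxCM
namespace AuxCM

lemma IsSubterm.trans {a b c : Term} (h1 : Term.IsSubterm a b) (h2 : Term.IsSubterm b c) :
    Term.IsSubterm a c := by
  induction h2 with
  | refl => exact h1
  | func hm _ ih => exact Term.IsSubterm.func hm ih

lemma subst_func (σ : Subst) (f : ℕ) (args : List Term) :
    Term.subst σ (Term.func f args) = Term.func f (args.map (Term.subst σ)) := by
  rw [Term.subst]
  congr 1
  simp

lemma isSubterm_func_iff {s : Term} {f : ℕ} {args : List Term} :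
    Term.IsSubterm s (Term.func f args) ↔
      s = Term.func f args ∨ ∃ a ∈ args, Term.IsSubterm s a := by
  constructor
  · intro h
    cases h with
    | refl => exact Or.inl rfl
    | func hm hs => exact Or.inr ⟨_, hm, hs⟩
  · rintro (rfl | ⟨a, ha, hs⟩)
    · exact Term.IsSubterm.refl _
    · exact Term.IsSubterm.func ha hs

lemma isSubterm_atom {s t : Term} (h : Term.IsSubterm s t)
    (ht : (∃ x, t = Term.var x) ∨ (∃ c, t = Term.cst c) ∨ (∃ n, t = Term.nonce n)) :
    s = t := by
  cases h with
  | refl => rfl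
  | func hm hs => rcases ht with ⟨x, hx⟩ | ⟨c, hc⟩ | ⟨n, hn⟩ <;> simp_all

lemma var_subterm_subst {σ : Subst} {y : ℕ} :
    ∀ t : Term, Term.IsSubterm (Term.var y) (t.subst σ) →
      ∃ x, Term.IsSubterm (Term.var x) t ∧ Term.IsSubterm (Term.var y) (σ x) := by
  intro t
  induction t using Term.rec (motive_2 := fun l => ∀ t ∈ l,
      Term.IsSubterm (Term.var y) (t.subst σ) →
      ∃ x, Term.IsSubterm (Term.var x) t ∧ Term.IsSubterm (Term.var y) (σ x)) with
  | var x => intro h; exact ⟨x, Term.IsSubterm.refl _, by simpa [Term.subst] using h⟩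
  | cst c =>
      intro h
      have := isSubterm_atom (by simpa [Term.subst] using h) (by simp)
      simp at this
  | nonce n =>
      intro h
      have := isSubterm_atom (by simpa [Term.subst] using h) (by simp)
      simp at this
  | func f args ih =>
      intro h
      rw [subst_func] at h
      rcases isSubterm_func_iff.1 h with heq | ⟨a, ha, hs⟩
      · simp at heq
      · rcases List.mem_map.1 ha with ⟨b, hb, rfl⟩
        rcases ih b hb hs with ⟨x, hx1, hx2⟩
        exact ⟨x, Term.IsSubterm.func hb hx1, hx2⟩
  | nil => simp_all
  | cons a l iha ihl =>
      rename_i t ht hsub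
      rcases List.mem_cons.1 ht with rfl | ht
      · exact iha hsub
      · exact ihl t ht hsub

lemma ground_subst {σ : Subst} {t : Term}
    (h : ∀ x, Term.IsSubterm (Term.var x) t → (σ x).Ground) : (t.subst σ).Ground := by
  rw [Term.Ground, Set.eq_empty_iff_forall_notMem]
  intro y hy
  rcases var_subterm_subst t hy with ⟨x, hx1, hx2⟩
  have := h x hx1
  rw [Term.Ground, Set.eq_empty_iff_forall_notMem] at this
  exact this y hx2

lemma sub_finite : ∀ t : Term, (Term.sub t).Finite := by
  intro t
  induction t using Term.rec (motive_2 := fun l => ∀ t ∈ l, (Term.sub t).Finite) with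
  | var x => exact (Set.finite_singleton _).subset (fun s hs => by
      simpa using isSubterm_atom hs (by simp))
  | cst c => exact (Set.finite_singleton _).subset (fun s hs => by
      simpa using isSubterm_atom hs (by simp))
  | nonce n => exact (Set.finite_singleton _).subset (fun s hs => by
      simpa using isSubterm_atom hs (by simp))
  | func f args ih =>
      have : Term.sub (Term.func f args) ⊆
          {Term.func f args} ∪ ⋃ a ∈ {a | a ∈ args}, Term.sub a := by
        intro s hs
        rcases isSubterm_func_iff.1 hs with rfl | ⟨a, ha, hs⟩
        · exact Or.inl rfl
        · exact Or.inr (Set.mem_biUnion ha hs)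
      exact ((Set.finite_singleton _).union
        ((args.finite_toSet).biUnion (fun a ha => ih a ha))).subset this
  | nil => simp_all
  | cons a l iha ihl =>
      rename_i t ht
      rcases List.mem_cons.1 ht with rfl | ht
      · exact iha
      · exact ihl t ht

lemma subT_finite {T : Set Term} (hT : T.Finite) : (subT T).Finite := by
  have : subT T = ⋃ t ∈ T, Term.sub t := by
    ext s; simp [subT, Term.sub]
  rw [this]
  exact hT.biUnion (fun t _ => sub_finite t)

lemma csTerms_finite (S : CSystem) : (csTerms S).Finite := by
  have : csTerms S = Constraint.term '' {c | c ∈ S} := by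
    ext t; simp [csTerms, Set.image]
  rw [this]
  exact (S.finite_toSet).image _

lemma subT_csSub_subset (S : CSystem) : subT (csSub S) ⊆ subT (csTerms S) := by
  rintro s ⟨t, ⟨u, hu, htu⟩, hst⟩
  exact ⟨u, hu, IsSubterm.trans hst htu⟩

end AuxCM
namespace AuxCM

/-- Conditions for a "clean block" of standard steps over knowledge `P`. -/
def GoodBlock (DS : DeductionSystem) (P : Set Term) (E : List Step) : Prop :=
  (∀ s ∈ E, IsDeduction DS s) ∧
  (∀ s ∈ E, ∃ l r, s = .std l r) ∧
  (∀ (i : ℕ) (l : List Term) (r : Term), E[i]? = some (Step.std l r) → ∀ u ∈ l, u ∈ P ∪ rset (E.take i)) ∧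
  (E.map Step.rhs).Nodup ∧
  (∀ s ∈ E, s.rhs ∉ P)

lemma clean (DS : DeductionSystem) (P : Set Term) :
    ∀ E0 : List Step,
    (∀ s ∈ E0, IsDeduction DS s) →
    (∀ (i : ℕ) (l : List Term) (r : Term), E0[i]? = some (Step.std l r) → ∀ u ∈ l, u ∈ RHSset E0 i) →
    (∀ (j : ℕ) (u : Term), E0[j]? = some (Step.recv u) → u ∈ P) →
    ∃ E : List Step, GoodBlock DS P E ∧ rset E0 ⊆ P ∪ rset E := by
  intro E0
  induction E0 using List.reverseRecOn with
  | nil =>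
      intro _ _ _
      exact ⟨[], ⟨by simp, by simp, by simp, by simp, by simp⟩, by simp [rset]⟩
  | append_singleton D s ih =>
      intro h1 h2 h3
      have hpre : ∀ (i : ℕ) (x : Step), D[i]? = some x → (D ++ [s])[i]? = some x := by
        intro i x hx
        rw [List.getElem?_append_left (List.getElem?_eq_some_iff.1 hx).1]
        exact hx
      obtain ⟨E, hE, hcov⟩ := ih
        (fun s' hs' => h1 s' (List.mem_append_left _ hs'))
        (fun i l r hi u hu => by
          have := h2 i l r (hpre i _ hi) u hu
          rwa [RHSset_prefix D [s] (le_of_lt (List.getElem?_eq_some_iff.1 hi).1)] at this)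
        (fun j u hj => h3 j u (hpre j _ hj))
      have hslast : (D ++ [s])[D.length]? = some s := List.getElem?_concat_length
      have hrsetDs : rset (D ++ [s]) = rset D ∪ {s.rhs} := by
        rw [rset_append]; congr 1; simp [rset, Set.ext_iff, eq_comm]
      obtain ⟨hE1, hE2, hE3, hE4, hE5⟩ := hE
      match s with
      | .recv u =>
          refine ⟨E, ⟨hE1, hE2, hE3, hE4, hE5⟩, ?_⟩
          rw [hrsetDs]
          have hu : u ∈ P := h3 D.length u hslast
          intro r hr
          rcases hr with hr | hr
          · exact hcov hr
          · simp only [Set.mem_singleton_iff] at hr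
            subst hr; exact Or.inl hu
      | .std l r =>
          by_cases hr : r ∈ P ∪ rset E
          · refine ⟨E, ⟨hE1, hE2, hE3, hE4, hE5⟩, ?_⟩
            rw [hrsetDs]
            intro x hx
            rcases hx with hx | hx
            · exact hcov hx
            · simp only [Set.mem_singleton_iff] at hx; subst hx; exact hr
          · refine ⟨E ++ [Step.std l r], ⟨?_, ?_, ?_, ?_, ?_⟩, ?_⟩
            · intro s' hs'
              rcases List.mem_append.1 hs' with hs' | hs'
              · exact hE1 s' hs'
              · simp only [List.mem_singleton] at hs'; subst hs'
                exact h1 _ (List.mem_append_right _ (by simp))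
            · intro s' hs'
              rcases List.mem_append.1 hs' with hs' | hs'
              · exact hE2 s' hs'
              · simp only [List.mem_singleton] at hs'; exact ⟨l, r, hs'⟩
            · intro i li ri hi u hu
              by_cases hiE : i < E.length
              · rw [List.getElem?_append_left hiE] at hi
                rw [List.take_append_of_le_length (le_of_lt hiE)]
                exact hE3 i li ri hi u hu
              · have hieq : i = E.length := by
                  have := (List.getElem?_eq_some_iff.1 hi).1
                  simp at this; omega
                subst hieq
                rw [List.getElem?_concat_length] at hi
                injection hi with hi
                injection hi with hi1 hi2
                subst hi1
                have : u ∈ RHSset (D ++ [Step.std l r]) D.length :=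
                  h2 D.length l r hslast u hu
                rw [RHSset_prefix D _ le_rfl, RHSset_full] at this
                have := hcov this
                rw [List.take_append_of_le_length le_rfl, List.take_length]
                exact this
            · rw [List.map_append, List.nodup_append]
              refine ⟨hE4, by simp, ?_⟩
              intro x hx y hx' hxy; subst hxy
              simp only [List.map_cons, List.map_nil, List.mem_singleton] at hx'
              subst hx'
              rcases List.mem_map.1 hx with ⟨s', hs', hrs'⟩
              exact hr (Or.inr ⟨s', hs', hrs'⟩)
            · intro s' hs'
              rcases List.mem_append.1 hs' with hs' | hs'
              · exact hE5 s' hs'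
              · simp only [List.mem_singleton] at hs'; subst hs'
                intro hP; exact hr (Or.inl hP)
            · rw [hrsetDs, rset_append]
              intro x hx
              rcases hx with hx | hx
              · rcases hcov hx with hx | hx
                · exact Or.inl hx
                · exact Or.inr (Or.inl hx)
              · simp only [Set.mem_singleton_iff] at hx; subst hx
                exact Or.inr (Or.inr ⟨Step.std l x, by simp, rfl⟩)

end AuxCM
namespace AuxCM

lemma GoodBlock.append {DS : DeductionSystem} {P : Set Term} {E₁ E₂ : List Step}
    (h1 : GoodBlock DS P E₁) (h2 : GoodBlock DS (P ∪ rset E₁) E₂) :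
    GoodBlock DS P (E₁ ++ E₂) := by
  obtain ⟨a1, b1, c1, d1, e1⟩ := h1
  obtain ⟨a2, b2, c2, d2, e2⟩ := h2
  refine ⟨?_, ?_, ?_, ?_, ?_⟩
  · intro s hs; rcases List.mem_append.1 hs with hs | hs
    · exact a1 s hs
    · exact a2 s hs
  · intro s hs; rcases List.mem_append.1 hs with hs | hs
    · exact b1 s hs
    · exact b2 s hs
  · intro i l r hi u hu
    by_cases hiE : i < E₁.length
    · rw [List.getElem?_append_left hiE] at hi
      rw [List.take_append_of_le_length (le_of_lt hiE)]
      exact c1 i l r hi u hu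
    · push_neg at hiE
      rw [List.getElem?_append_right hiE] at hi
      have hieq : i = E₁.length + (i - E₁.length) := by omega
      rw [hieq, List.take_length_add_append, rset_append]
      have := c2 (i - E₁.length) l r hi u hu
      rcases this with (h | h) | h
      · exact Or.inl h
      · exact Or.inr (Or.inl h)
      · exact Or.inr (Or.inr h)
  · rw [List.map_append, List.nodup_append]
    refine ⟨d1, d2, ?_⟩
    intro x hx y hx' hxy; subst hxy
    rcases List.mem_map.1 hx with ⟨s', hs', hrs'⟩
    rcases List.mem_map.1 hx' with ⟨s'', hs'', hrs''⟩
    exact e2 s'' hs'' (Or.inr ⟨s', hs', by rw [hrs', hrs'']⟩)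
  · intro s hs; rcases List.mem_append.1 hs with hs | hs
    · exact e1 s hs
    · intro hP; exact e2 s hs (Or.inl hP)

lemma clean_der {DS : DeductionSystem} {P : Set Term} {u : Term} (h : u ∈ Der DS P) :
    ∃ E : List Step, GoodBlock DS P E ∧ u ∈ P ∪ rset E := by
  obtain ⟨E0, ⟨hded, hlhs⟩, hrecv, l, hlast⟩ := h
  obtain ⟨E, hgood, hcov⟩ := clean DS P E0 hded hlhs hrecv
  refine ⟨E, hgood, hcov ⟨Step.std l u, List.mem_of_getLast? hlast, rfl⟩⟩

lemma sat_block (DS : DeductionSystem) (F : Set Term) (hF : F.Finite) :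
    ∀ (n : ℕ) (P : Set Term), (F \ P).ncard ≤ n →
    ∃ E, GoodBlock DS P E ∧ (F ∩ Der DS (P ∪ rset E) ⊆ P ∪ rset E) := by
  intro n
  induction n with
  | zero =>
      intro P hP
      have hFP : F ⊆ P := by
        have : F \ P = ∅ := by
          exact (Set.ncard_eq_zero (hF.subset Set.diff_subset)).1 (Nat.le_zero.1 hP)
        intro x hx
        by_contra hxP
        exact absurd this (by
          apply Set.nonempty_iff_ne_empty.1
          exact ⟨x, hx, hxP⟩)
      refine ⟨[], ⟨by simp, by simp, by simp, by simp, by simp⟩, ?_⟩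
      intro x hx
      exact Or.inl (hFP hx.1)
  | succ n ih =>
      intro P hP
      by_cases h : F ∩ Der DS P ⊆ P
      · refine ⟨[], ⟨by simp, by simp, by simp, by simp, by simp⟩, ?_⟩
        have : rset ([] : List Step) = ∅ := by simp [rset]
        rw [this, Set.union_empty]
        intro x hx
        exact h hx
      · rw [Set.not_subset] at h
        obtain ⟨u, ⟨huF, huD⟩, huP⟩ := h
        obtain ⟨E₁, hgood₁, hcov₁⟩ := clean_der huD
        set P' := P ∪ rset E₁ with hP'
        have hcard : (F \ P').ncard ≤ n := by
          have hss : F \ P' ⊂ F \ P := by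
            constructor
            · intro x hx; exact ⟨hx.1, fun hxP => hx.2 (Or.inl hxP)⟩
            · intro hsub
              rcases hcov₁ with h' | h'
              · exact huP h'
              · exact (hsub ⟨huF, huP⟩).2 (Or.inr h')
          have := Set.ncard_lt_ncard hss (hF.subset Set.diff_subset)
          omega
        obtain ⟨E₂, hgood₂, hsat₂⟩ := ih P' hcard
        refine ⟨E₁ ++ E₂, GoodBlock.append hgood₁ hgood₂, ?_⟩
        have heq : P ∪ rset (E₁ ++ E₂) = P' ∪ rset E₂ := by
          rw [rset_append, hP', Set.union_assoc]
        rw [heq]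
        exact hsat₂

end AuxCM
namespace AuxCM

lemma rset_singleton (s : Step) : rset [s] = {s.rhs} := by
  ext r; simp [rset, eq_comm]

lemma mem_rset_of_getElem? {D : List Step} {i : ℕ} {s : Step} (h : D[i]? = some s) :
    s.rhs ∈ rset D := ⟨s, List.mem_iff_getElem?.2 ⟨i, h⟩, rfl⟩

lemma nodup_rhs_noDuplicateStd {E : List Step} (h : (E.map Step.rhs).Nodup) :
    NoDuplicateStd E := by
  intro i j li lj r hi hj
  have hi' : (E.map Step.rhs)[i]? = some r := by
    rw [List.getElem?_map, hi]; rfl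
  have hj' : (E.map Step.rhs)[j]? = some r := by
    rw [List.getElem?_map, hj]; rfl
  have hlen : i < (E.map Step.rhs).length := by
    rw [List.length_map]; exact (List.getElem?_eq_some_iff.1 hi).1
  exact (List.getElem?_inj hlen h).1 (hi'.trans hj'.symm)

lemma build (DS : DeductionSystem) (F : Set Term) (hF : F.Finite) :
    ∀ ts : List Term, (∀ t ∈ ts, t.Ground) →
    ∃ (D : List Step) (β : ℕ → ℕ),
      IsDerivation DS D ∧
      (∀ m m', m < m' → m' < ts.length → β m < β m') ∧
      (∀ (m : ℕ) (u : Term), ts[m]? = some u → D[β m]? = some (Step.recv u)) ∧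
      (∀ (j : ℕ) (u : Term), D[j]? = some (Step.recv u) →
        ∃ m < ts.length, β m = j ∧ ts[m]? = some u) ∧
      (∀ (j : ℕ) (u : Term), D[j]? = some (Step.recv u) →
        F ∩ Der DS (RHSset D j) ⊆ RHSset D j) ∧
      (F ∩ Der DS (RHSset D D.length) ⊆ RHSset D D.length) ∧
      NoDuplicateStd D := by
  intro ts
  induction ts using List.reverseRecOn with
  | nil =>
      intro _
      obtain ⟨E, ⟨b1, b2, b3, b4, b5⟩, bsat⟩ :=
        sat_block DS F hF ((F \ (∅ : Set Term)).ncard) ∅ le_rfl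
      have hnorecv : ∀ (j : ℕ) (u : Term), E[j]? ≠ some (Step.recv u) := by
        intro j u hj
        obtain ⟨l, r, hlr⟩ := b2 _ (List.mem_iff_getElem?.2 ⟨j, hj⟩)
        simp at hlr
      refine ⟨E, fun _ => 0, ⟨b1, ?_⟩, by simp, by simp, ?_, ?_, ?_, ?_⟩
      · intro i l r hi u hu
        have := b3 i l r hi u hu
        rw [Set.empty_union] at this
        rwa [RHSset_eq]
      · intro j u hj; exact absurd hj (hnorecv j u)
      · intro j u hj; exact absurd hj (hnorecv j u)
      · rw [RHSset_full]
        intro x hx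
        have := bsat (by rwa [Set.empty_union])
        rwa [Set.empty_union] at this
      · exact nodup_rhs_noDuplicateStd b4
  | append_singleton ts t ih =>
      intro hg
      obtain ⟨D, β, ⟨hded, hlhs⟩, hmono, hmap, hsurj, hsatr, hsatf, hnd⟩ :=
        ih (fun u hu => hg u (List.mem_append_left _ hu))
      set A : List Step := D ++ [Step.recv t] with hA
      have hlenA : A.length = D.length + 1 := by simp [hA]
      have hrsetA : rset A = rset D ∪ {t} := by
        rw [hA, rset_append, rset_singleton]; rfl
      obtain ⟨E, ⟨b1, b2, b3, b4, b5⟩, bsat⟩ :=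
        sat_block DS F hF ((F \ rset A).ncard) (rset A) le_rfl
      set D' : List Step := A ++ E with hD'
      have hEnorecv : ∀ (j : ℕ) (u : Term), E[j]? ≠ some (Step.recv u) := by
        intro j u hj
        obtain ⟨l, r, hlr⟩ := b2 _ (List.mem_iff_getElem?.2 ⟨j, hj⟩)
        simp at hlr
      have f1 : ∀ (j : ℕ), j < D.length → D'[j]? = D[j]? := by
        intro j hj
        rw [hD', List.getElem?_append_left (by omega), hA,
          List.getElem?_append_left hj]
      have f2 : D'[D.length]? = some (Step.recv t) := by
        rw [hD', List.getElem?_append_left (by omega), hA, List.getElem?_concat_length]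
      have f3 : ∀ i : ℕ, D'[A.length + i]? = E[i]? := by
        intro i
        rw [hD', List.getElem?_append_right (by omega)]
        congr 1; omega
      have g1 : ∀ k : ℕ, k ≤ D.length → RHSset D' k = RHSset D k := by
        intro k hk
        rw [hD', RHSset_prefix _ _ (by omega), hA, RHSset_prefix _ _ hk]
      have g2 : ∀ i : ℕ, RHSset D' (A.length + i) = rset A ∪ RHSset E i := by
        intro i; rw [hD', RHSset_append_offset]
      have hβlt : ∀ m < ts.length, β m < D.length := by
        intro m hm
        obtain ⟨u, hu⟩ : ∃ u, ts[m]? = some u := by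
          exact ⟨ts[m], (List.getElem?_eq_some_iff).2 ⟨hm, rfl⟩⟩
        exact (List.getElem?_eq_some_iff.1 (hmap m u hu)).1
      refine ⟨D', fun m => if m < ts.length then β m else D.length,
        ⟨?_, ?_⟩, ?_, ?_, ?_, ?_, ?_, ?_⟩
      -- deductions
      · intro s hs
        rw [hD', hA] at hs
        rcases List.mem_append.1 hs with hs | hs
        · rcases List.mem_append.1 hs with hs | hs
          · exact hded s hs
          · simp only [List.mem_singleton] at hs; subst hs
            exact hg t (List.mem_append_right _ (by simp))
        · exact b1 s hs
      -- lhs condition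
      · intro i l r hi u hu
        rcases Nat.lt_trichotomy i D.length with hilt | hieq | higt
        · rw [f1 i hilt] at hi
          rw [g1 i (le_of_lt hilt)]
          exact hlhs i l r hi u hu
        · subst hieq; rw [f2] at hi; simp at hi
        · have hieq : i = A.length + (i - A.length) := by omega
          rw [hieq, f3] at hi
          rw [hieq, g2]
          have := b3 _ l r hi u hu
          rcases this with h | h
          · exact Or.inl h
          · rw [RHSset_eq]; exact Or.inr h
      -- mono
      · intro m m' hmm' hm'
        simp only [List.length_append, List.length_singleton] at hm'
        by_cases h' : m' < ts.length
        · have hm : m < ts.length := lt_trans hmm' h'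
          simp only [if_pos h', if_pos hm]
          exact hmono m m' hmm' h'
        · have hm'eq : m' = ts.length := by omega
          have hm : m < ts.length := by omega
          simp only [if_neg h', if_pos hm]
          exact hβlt m hm
      -- map
      · intro m u hu
        by_cases hm : m < ts.length
        · rw [List.getElem?_append_left hm] at hu
          simp only [if_pos hm]
          rw [f1 _ (hβlt m hm)]
          exact hmap m u hu
        · have hmlen : m < ts.length + 1 := by
            have := (List.getElem?_eq_some_iff.1 hu).1; simp at this; omega
          have hmeq : m = ts.length := by omega
          subst hmeq
          rw [List.getElem?_concat_length] at hu
          injection hu with hu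
          subst hu
          simp only [if_neg hm]
          exact f2
      -- surj
      · intro j u hj
        rcases Nat.lt_trichotomy j D.length with hjlt | hjeq | hjgt
        · rw [f1 j hjlt] at hj
          obtain ⟨m, hm, hβ, hts⟩ := hsurj j u hj
          refine ⟨m, by simp; omega, ?_, ?_⟩
          · simp only [if_pos hm]; exact hβ
          · rw [List.getElem?_append_left hm]; exact hts
        · subst hjeq
          rw [f2] at hj
          injection hj with hj
          injection hj with hj
          refine ⟨ts.length, by simp, ?_, ?_⟩
          · simp
          · rw [List.getElem?_concat_length, hj]
        · have hjeq : j = A.length + (j - A.length) := by omega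
          rw [hjeq, f3] at hj
          exact absurd hj (hEnorecv _ u)
      -- saturation at recvs
      · intro j u hj
        rcases Nat.lt_trichotomy j D.length with hjlt | hjeq | hjgt
        · rw [f1 j hjlt] at hj
          rw [g1 j (le_of_lt hjlt)]
          exact hsatr j u hj
        · subst hjeq
          rw [g1 _ le_rfl]
          exact hsatf
        · have hjeq : j = A.length + (j - A.length) := by omega
          rw [hjeq, f3] at hj
          exact absurd hj (hEnorecv _ u)
      -- final saturation
      · have hlen : D'.length = A.length + E.length := by simp [hD']
        rw [hlen, g2, RHSset_full]
        exact bsat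
      -- no duplicate std
      · intro i j li lj r hi hj
        have hclassify : ∀ (k : ℕ) (lk : List Term), D'[k]? = some (Step.std lk r) →
            (k < D.length ∧ D[k]? = some (Step.std lk r)) ∨
            (A.length ≤ k ∧ E[k - A.length]? = some (Step.std lk r)) := by
          intro k lk hk
          rcases Nat.lt_trichotomy k D.length with h | h | h
          · rw [f1 k h] at hk; exact Or.inl ⟨h, hk⟩
          · subst h; rw [f2] at hk; simp at hk
          · have hkeq : k = A.length + (k - A.length) := by omega
            rw [hkeq, f3] at hk
            exact Or.inr ⟨by omega, hk⟩
        have hDrhs : ∀ (k : ℕ) (lk : List Term), D[k]? = some (Step.std lk r) →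
            r ∈ rset A := by
          intro k lk hk
          rw [hrsetA]
          exact Or.inl (mem_rset_of_getElem? hk)
        have hErhs : ∀ (k : ℕ) (lk : List Term), E[k]? = some (Step.std lk r) →
            r ∉ rset A := by
          intro k lk hk
          exact b5 _ (List.mem_iff_getElem?.2 ⟨k, hk⟩)
        rcases hclassify i li hi with ⟨hi1, hi2⟩ | ⟨hi1, hi2⟩ <;>
          rcases hclassify j lj hj with ⟨hj1, hj2⟩ | ⟨hj1, hj2⟩
        · exact hnd i j li lj r hi2 hj2
        · exact absurd (hDrhs i li hi2) (fun h => hErhs _ lj hj2 h)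
        · exact absurd (hDrhs j lj hj2) (fun h => hErhs _ li hi2 h)
        · have := nodup_rhs_noDuplicateStd b4 _ _ li lj r hi2 hj2
          omega

end AuxCM
namespace AuxCM

lemma cnt_step {α β : Type*} {f : α → Option β} {l : List α} {i : ℕ} {a : α} {b : β}
    (h : l[i]? = some a) (hb : f a = some b) :
    ((l.take (i + 1)).filterMap f).length = ((l.take i).filterMap f).length + 1 := by
  rw [List.take_succ, h]
  simp [List.filterMap_append, List.filterMap_cons, hb]

lemma cnt_mono {α β : Type*} (f : α → Option β) (l : List α) {i j : ℕ} (h : i ≤ j) :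
    ((l.take i).filterMap f).length ≤ ((l.take j).filterMap f).length := by
  have : l.take i = (l.take j).take i := by rw [List.take_take, min_eq_left h]
  rw [this]
  conv_rhs => rw [← List.take_append_drop i (l.take j)]
  rw [List.filterMap_append, List.length_append]
  omega

lemma filterMap_cnt_getElem? {α β : Type*} {f : α → Option β} :
    ∀ {l : List α} {i : ℕ} {a : α} {b : β}, l[i]? = some a → f a = some b →
    (l.filterMap f)[((l.take i).filterMap f).length]? = some b := by
  intro l
  induction l with
  | nil => intro i a b h; simp at h
  | cons x l' ih =>
      intro i a b h hb
      cases i with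
      | zero =>
          simp only [List.getElem?_cons_zero] at h
          injection h with h; subst h
          simp [List.filterMap_cons, hb]
      | succ i =>
          simp only [List.getElem?_cons_succ] at h
          have := ih h hb
          cases hfx : f x with
          | none => simpa [List.filterMap_cons, hfx] using this
          | some c => simpa [List.filterMap_cons, hfx] using this

lemma filterMap_cnt_surj {α β : Type*} {f : α → Option β} :
    ∀ {l : List α} {m : ℕ} {b : β}, (l.filterMap f)[m]? = some b →
    ∃ (i : ℕ) (a : α), l[i]? = some a ∧ f a = some b ∧
      ((l.take i).filterMap f).length = m := by
  intro l
  induction l with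
  | nil => intro m b h; simp at h
  | cons x l' ih =>
      intro m b h
      cases hfx : f x with
      | none =>
          rw [List.filterMap_cons, hfx] at h
          obtain ⟨i, a, h1, h2, h3⟩ := ih h
          exact ⟨i + 1, a, by simpa using h1, h2, by
            simpa [List.take_succ_cons, List.filterMap_cons, hfx] using h3⟩
      | some c =>
          rw [List.filterMap_cons, hfx] at h
          cases m with
          | zero =>
              simp only [List.getElem?_cons_zero] at h
              injection h with h; subst h
              exact ⟨0, x, by simp, hfx, by simp⟩
          | succ m =>
              simp only [List.getElem?_cons_succ] at h
              obtain ⟨i, a, h1, h2, h3⟩ := ih h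
              exact ⟨i + 1, a, by simpa using h1, h2, by
                simpa [List.take_succ_cons, List.filterMap_cons, hfx] using h3⟩

end AuxCM
/-- For every ground substitution `σ` with `dom(σ) = vars(S)` there exists an
`(S,σ)`-compliant, `(Sub(S),σ)`-maximal derivation in which no term is deduced
twice by a standard rule. -/
theorem exists_compliant_maximal (DS : DeductionSystem) (S : CSystem) (hS : IsCS S)
    (σ : Subst) (hg : σ.IsGround) (hi : σ.Idem) (hd : σ.dom = csVars S) :
    ∃ (D : List Step) (α : ℕ → ℕ), IsDerivation DS D ∧ Compliant S σ D α ∧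
      MaximalDeriv DS (csSub S) σ D ∧ NoDuplicateStd D := by
  classical
  open AuxCM in
  set sendOf : Constraint → Option Term := fun c => match c with
    | Constraint.send t => some t
    | _ => none with hsendOf
  have hsendOf_eq : ∀ (c : Constraint) (t : Term), sendOf c = some t ↔ c = Constraint.send t := by
    intro c t; cases c <;> simp [hsendOf]
  set sends : List Term := S.filterMap sendOf with hsends
  set ts : List Term := sends.map (Term.subst σ) with hts
  -- groundness of instantiated send terms
  have hσground : ∀ x ∈ csVars S, (σ x).Ground := by
    intro x hx
    by_cases hxd : x ∈ σ.dom
    · exact hg x hxd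
    · exact absurd (hd ▸ hx) hxd
  have hground : ∀ u ∈ ts, u.Ground := by
    intro u hu
    rw [hts] at hu
    rcases List.mem_map.1 hu with ⟨v, hv, rfl⟩
    rcases List.mem_iff_getElem?.1 hv with ⟨m, hm⟩
    obtain ⟨i, c, hic, hfc, -⟩ := filterMap_cnt_surj hm
    rw [hsendOf_eq] at hfc; subst hfc
    apply ground_subst
    intro x hxv
    have hxS := hS.1 i v hic hxv
    obtain ⟨j, hj, u', hju', hxu'⟩ := hxS
    apply hσground
    refine ⟨u', ⟨Constraint.recv u', List.mem_iff_getElem?.2 ⟨j, hju'⟩, rfl⟩, hxu'⟩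
  set F : Set Term := Term.subst σ '' (subT (csSub S)) with hF
  have hFfin : F.Finite :=
    (((subT_finite (csTerms_finite S)).subset (subT_csSub_subset S))).image _
  obtain ⟨D, β, hder, hmono, hmap, hsurj, hsatr, hsatf, hnd⟩ := build DS F hFfin ts hground
  set α : ℕ → ℕ := fun i => β ((S.take i).filterMap sendOf).length with hα
  have hcnt_lt : ∀ (j : ℕ) (t : Term), S[j]? = some (Constraint.send t) →
      ((S.take j).filterMap sendOf).length < ts.length := by
    intro j t hj
    have := filterMap_cnt_getElem? hj ((hsendOf_eq _ t).2 rfl)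
    have hlt := (List.getElem?_eq_some_iff.1 this).1
    rw [hts, List.length_map]
    exact hlt
  refine ⟨D, α, hder, ⟨?_, ?_, ?_⟩, ?_, hnd⟩
  · -- mono
    intro i j ti tj hsi hsj hij
    apply hmono _ _ _ (hcnt_lt j tj hsj)
    have h1 := cnt_step hsi ((hsendOf_eq _ ti).2 rfl)
    have h2 := cnt_mono sendOf S (show i + 1 ≤ j by omega)
    omega
  · -- maps
    intro i t hsi
    have h1 := filterMap_cnt_getElem? hsi ((hsendOf_eq _ t).2 rfl)
    have h2 : ts[((S.take i).filterMap sendOf).length]? = some (t.subst σ) := by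
      rw [hts, List.getElem?_map, h1]; rfl
    exact hmap _ _ h2
  · -- surj
    intro j u hj
    obtain ⟨m, hm, hβ, htsm⟩ := hsurj j u hj
    rw [hts, List.getElem?_map] at htsm
    cases hsm : sends[m]? with
    | none => rw [hsm] at htsm; simp at htsm
    | some v =>
        obtain ⟨i, c, hic, hfc, hcnt⟩ := filterMap_cnt_surj hsm
        rw [hsendOf_eq] at hfc; subst hfc
        exact ⟨i, v, hic, by rw [hα]; simp only [hcnt]; exact hβ⟩
  · -- maximality
    intro t ht k hk hder'
    have htF : t.subst σ ∈ F := ⟨t, ht, rfl⟩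
    have hmem : nextRecv D k ∈ ({D.length} ∪
        {j | k ≤ j ∧ ∃ u, D[j]? = some (Step.recv u)} : Set ℕ) := by
      apply Nat.sInf_mem
      exact ⟨D.length, Or.inl rfl⟩
    rcases hmem with hmem | ⟨hkle, u, hu⟩
    · simp only [Set.mem_singleton_iff] at hmem
      rw [nextRecv] at hmem ⊢
      rw [hmem]
      exact hsatf ⟨htF, Der_mono DS (RHSset_mono D hk) hder'⟩
    · exact hsatr _ u hu ⟨htF, Der_mono DS (RHSset_mono D hkle) hder'⟩
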